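/- arXiv:1006.0716 — 3 statements merged into one kernel-verified Lean document; each statement's English description precedes it below -/
import Mathlib

section
/- Let k₃ : ℝ → ℝ be continuous and nowhere zero, set θ(s) = ∫₀ˢ k₃(t) dt, and let r, f : ℝ → ℝ be differentiable with r'(s) = f(s)·k₃(s) and f'(s) = k₃(s)·r(s). Then there exist constants C₁, C₂ such that r(s) = C₁·cosh(θ(s)) + C₂·sinh(θ(s)) for all s. -/
theorem stmt_6 (k₃ r f : ℝ → ℝ)
    (hk₃c : Continuous k₃) (hk₃ne : ∀ s, k₃ s ≠ 0)
    (hr : Differentiable ℝ r) (hf : Differentiable ℝ f)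
    (h1 : ∀ s, deriv r s = f s * k₃ s)
    (h2 : ∀ s, deriv f s = k₃ s * r s) :
    ∃ C₁ C₂ : ℝ, ∀ s, r s = C₁ * Real.cosh (∫ t in (0:ℝ)..s, k₃ t)
        + C₂ * Real.sinh (∫ t in (0:ℝ)..s, k₃ t) := by
  set θ : ℝ → ℝ := fun s => ∫ t in (0:ℝ)..s, k₃ t with hθdef
  have hθ : ∀ s, HasDerivAt θ (k₃ s) s := fun s =>
    intervalIntegral.integral_hasDerivAt_right (hk₃c.intervalIntegrable _ _)
      (hk₃c.stronglyMeasurableAtFilter _ _) hk₃c.continuousAt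
  have hr' : ∀ s, HasDerivAt r (f s * k₃ s) s := fun s => by
    have := (hr s).hasDerivAt; rwa [h1 s] at this
  have hf' : ∀ s, HasDerivAt f (k₃ s * r s) s := fun s => by
    have := (hf s).hasDerivAt; rwa [h2 s] at this
  have hm : ∀ s, HasDerivAt
      (fun s => r s * Real.cosh (θ s) - f s * Real.sinh (θ s)) 0 s := by
    intro s
    have h := ((hr' s).mul ((Real.hasDerivAt_cosh (θ s)).comp s (hθ s))).sub
      ((hf' s).mul ((Real.hasDerivAt_sinh (θ s)).comp s (hθ s)))
    exact h.congr_deriv (by simp only [Function.comp]; ring)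
  have hn : ∀ s, HasDerivAt
      (fun s => f s * Real.cosh (θ s) - r s * Real.sinh (θ s)) 0 s := by
    intro s
    have h := ((hf' s).mul ((Real.hasDerivAt_cosh (θ s)).comp s (hθ s))).sub
      ((hr' s).mul ((Real.hasDerivAt_sinh (θ s)).comp s (hθ s)))
    exact h.congr_deriv (by simp only [Function.comp]; ring)
  have hmc : ∀ s, r s * Real.cosh (θ s) - f s * Real.sinh (θ s)
      = r 0 * Real.cosh (θ 0) - f 0 * Real.sinh (θ 0) := by
    intro s
    exact is_const_of_deriv_eq_zero (fun x => (hm x).differentiableAt)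
      (fun x => (hm x).deriv) s 0
  have hnc : ∀ s, f s * Real.cosh (θ s) - r s * Real.sinh (θ s)
      = f 0 * Real.cosh (θ 0) - r 0 * Real.sinh (θ 0) := by
    intro s
    exact is_const_of_deriv_eq_zero (fun x => (hn x).differentiableAt)
      (fun x => (hn x).deriv) s 0
  have hθ0 : θ 0 = 0 := intervalIntegral.integral_same
  refine ⟨r 0, f 0, fun s => ?_⟩
  have hM := hmc s
  have hN := hnc s
  rw [hθ0, Real.cosh_zero, Real.sinh_zero] at hM hN
  have hid : Real.cosh (θ s) ^ 2 - Real.sinh (θ s) ^ 2 = 1 :=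
    Real.cosh_sq_sub_sinh_sq (θ s)
  show r s = r 0 * Real.cosh (θ s) + f 0 * Real.sinh (θ s)
  linear_combination Real.cosh (θ s) * hM + Real.sinh (θ s) * hN - r s * hid
end

section
/- Let k₃ : ℝ → ℝ be continuous and nowhere zero, θ(s) = ∫₀ˢ k₃(t) dt, and let γ(s) = A·cosh(θ(s)) + B·sinh(θ(s)) with constants A, B. Suppose there are differentiable functions r, f with γ'(s)/k₃(s) = -r(s)·c and γ(s) = -f(s)·c for a nonzero constant c. Then B² - A² = c²·(r(s)² - f(s)²) for all s; in particular r(s)² - f(s)² is constant. -/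
theorem stmt_15 (k₃ r f : ℝ → ℝ) (A B c : ℝ) (γ : ℝ → ℝ)
    (hk₃c : Continuous k₃) (hk₃ne : ∀ s, k₃ s ≠ 0)
    (hγ : ∀ s, γ s = A * Real.cosh (∫ t in (0:ℝ)..s, k₃ t)
        + B * Real.sinh (∫ t in (0:ℝ)..s, k₃ t))
    (hr : Differentiable ℝ r) (hf : Differentiable ℝ f)
    (hc : c ≠ 0)
    (h1 : ∀ s, deriv γ s / k₃ s = -(r s * c))
    (h2 : ∀ s, γ s = -(f s * c)) :
    ∀ s, B ^ 2 - A ^ 2 = c ^ 2 * (r s ^ 2 - f s ^ 2) := by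
  intro s
  set θ : ℝ → ℝ := fun s => ∫ t in (0:ℝ)..s, k₃ t with hθ
  have hI : HasDerivAt θ (k₃ s) s :=
    intervalIntegral.integral_hasDerivAt_right (hk₃c.intervalIntegrable _ _)
      (hk₃c.stronglyMeasurableAtFilter _ _) hk₃c.continuousAt
  have hγd : HasDerivAt γ ((A * Real.sinh (θ s) + B * Real.cosh (θ s)) * k₃ s) s := by
    have h : HasDerivAt (fun u => A * Real.cosh (θ u) + B * Real.sinh (θ u))
        (A * (Real.sinh (θ s) * k₃ s) + B * (Real.cosh (θ s) * k₃ s)) s := by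
      exact (((Real.hasDerivAt_cosh (θ s)).comp s hI).const_mul A).add
        (((Real.hasDerivAt_sinh (θ s)).comp s hI).const_mul B)
    have := h.congr_of_eventuallyEq (Filter.Eventually.of_forall fun u => (hγ u))
    rw [show (A * Real.sinh (θ s) + B * Real.cosh (θ s)) * k₃ s = A * (Real.sinh (θ s) * k₃ s) + B * (Real.cosh (θ s) * k₃ s) by ring]
    exact this
  have hr' : r s * c = -(A * Real.sinh (θ s) + B * Real.cosh (θ s)) := by
    have := h1 s
    rw [hγd.deriv, mul_div_assoc, div_self (hk₃ne s), mul_one] at this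
    linarith
  have hf' : f s * c = -(A * Real.cosh (θ s) + B * Real.sinh (θ s)) := by
    have := h2 s
    rw [hγ s] at this
    linarith
  have hid : Real.cosh (θ s) ^ 2 - Real.sinh (θ s) ^ 2 = 1 := Real.cosh_sq_sub_sinh_sq _
  have : c ^ 2 * (r s ^ 2 - f s ^ 2) = (r s * c) ^ 2 - (f s * c) ^ 2 := by ring
  rw [this, hr', hf']
  nlinarith [hid]
end

section
/- Let θ : ℝ → ℝ be differentiable with θ' = k₃ nowhere zero, and let r, f : ℝ → ℝ be differentiable with r' = f·k₃ and f' = k₃·r. Define A(s) = -r(s)·sinh(θ(s)) + f(s)·cosh(θ(s)) and B(s) = r(s)·cosh(θ(s)) - f(s)·sinh(θ(s)). Then A and B are constant functions. -/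
theorem stmt_16 (θ k₃ r f : ℝ → ℝ)
    (hθ : Differentiable ℝ θ) (hθ' : ∀ s, deriv θ s = k₃ s)
    (hk₃ne : ∀ s, k₃ s ≠ 0)
    (hr : Differentiable ℝ r) (hf : Differentiable ℝ f)
    (h1 : ∀ s, deriv r s = f s * k₃ s)
    (h2 : ∀ s, deriv f s = k₃ s * r s) :
    (∃ a : ℝ, ∀ s, -(r s * Real.sinh (θ s)) + f s * Real.cosh (θ s) = a) ∧
    (∃ b : ℝ, ∀ s, r s * Real.cosh (θ s) - f s * Real.sinh (θ s) = b) := by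
  have hA : ∀ s, HasDerivAt (fun s => -(r s * Real.sinh (θ s)) + f s * Real.cosh (θ s)) 0 s := by
    intro s
    have hθs := (hθ s).hasDerivAt
    rw [hθ' s] at hθs
    have hrs := (hr s).hasDerivAt; rw [h1 s] at hrs
    have hfs := (hf s).hasDerivAt; rw [h2 s] at hfs
    have := (((hrs.mul ((Real.hasDerivAt_sinh (θ s)).comp s hθs)).neg).add
      (hfs.mul ((Real.hasDerivAt_cosh (θ s)).comp s hθs)))
    refine this.congr_deriv ?_
    simp only [Function.comp]; ring
  have hB : ∀ s, HasDerivAt (fun s => r s * Real.cosh (θ s) - f s * Real.sinh (θ s)) 0 s := by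
    intro s
    have hθs := (hθ s).hasDerivAt
    rw [hθ' s] at hθs
    have hrs := (hr s).hasDerivAt; rw [h1 s] at hrs
    have hfs := (hf s).hasDerivAt; rw [h2 s] at hfs
    have := ((hrs.mul ((Real.hasDerivAt_cosh (θ s)).comp s hθs)).sub
      (hfs.mul ((Real.hasDerivAt_sinh (θ s)).comp s hθs)))
    refine this.congr_deriv ?_
    simp only [Function.comp]; ring
  constructor
  · exact ⟨_, fun s => is_const_of_deriv_eq_zero (fun x => (hA x).differentiableAt)
      (fun x => (hA x).deriv) s 0⟩
  · exact ⟨_, fun s => is_const_of_deriv_eq_zero (fun x => (hB x).differentiableAt)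
      (fun x => (hB x).deriv) s 0⟩
end
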